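/- Let D ≥ 1, let μ be the rotation-invariant (uniform) probability measure on the unit sphere S = {u ∈ ℂ^D : ‖u‖ = 1}, let ρ be a density matrix on ℂ^D, and let ν_ρ be the Born probability measure on S, i.e. the measure with density u ↦ D·⟨u, ρ u⟩ with respect to μ. Then for every Hermitian D×D matrix O, ∫_S ((D+1)·⟨u, O u⟩ − tr(O)) dν_ρ(u) = tr(O ρ). -/

import Mathlib

open MeasureTheory Matrix
open scoped ComplexOrder

noncomputable instance (D : ℕ) : MeasurableSpace (EuclideanSpace ℂ (Fin D)) := WithLp.measurableSpace _ _
instance (D : ℕ) : BorelSpace (EuclideanSpace ℂ (Fin D)) := PiLp.borelSpace _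

/-- The quadratic form `⟨u, A u⟩` of a matrix `A` at a vector `u ∈ ℂ^D`,
with respect to the standard inner product on `ℂ^D`. -/
noncomputable def expval {D : ℕ} (A : Matrix (Fin D) (Fin D) ℂ)
    (u : EuclideanSpace ℂ (Fin D)) : ℂ :=
  inner ℂ u ((Matrix.toEuclideanLin A) u)

noncomputable section ShadowAux

namespace ShadowAux

variable {D : ℕ}

private lemma sum_pair_congr (a b : Fin D) (hab : a ≠ b) (f g : Fin D → ℝ)
    (hfg : f a + f b = g a + g b) (h : ∀ k, k ≠ a → k ≠ b → f k = g k) :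
    ∑ k, f k = ∑ k, g k := by
  classical
  have hb : b ∈ (Finset.univ : Finset (Fin D)).erase a :=
    Finset.mem_erase.2 ⟨Ne.symm hab, Finset.mem_univ b⟩
  rw [← Finset.sum_erase_add _ f (Finset.mem_univ a), ← Finset.sum_erase_add _ f hb,
      ← Finset.sum_erase_add _ g (Finset.mem_univ a), ← Finset.sum_erase_add _ g hb]
  have : ∑ k ∈ ((Finset.univ : Finset (Fin D)).erase a).erase b, f k
      = ∑ k ∈ ((Finset.univ : Finset (Fin D)).erase a).erase b, g k := by
    apply Finset.sum_congr rfl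
    intro k hk
    rw [Finset.mem_erase, Finset.mem_erase] at hk
    exact h k hk.2.1 hk.1
  rw [this]; linarith

/-- Diagonal phase unitary. -/
def phaseU (ζ : Fin D → ℂ) (hζ : ∀ k, ‖ζ k‖ = 1) :
    EuclideanSpace ℂ (Fin D) ≃ₗᵢ[ℂ] EuclideanSpace ℂ (Fin D) where
  toLinearEquiv :=
  { toFun := fun u => WithLp.toLp 2 (fun k => ζ k * u k)
    map_add' := by intro u v; ext k; simp [mul_add]
    map_smul' := by intro c u; ext k; simp; ring
    invFun := fun u => WithLp.toLp 2 (fun k => (ζ k)⁻¹ * u k)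
    left_inv := by
      intro u; ext k
      have h : ζ k ≠ 0 := by intro h; have := hζ k; rw [h] at this; simp at this
      simp [h]
    right_inv := by
      intro u; ext k
      have h : ζ k ≠ 0 := by intro h; have := hζ k; rw [h] at this; simp at this
      field_simp }
  norm_map' := by
    intro u
    simp only [EuclideanSpace.norm_eq]
    congr 1
    apply Finset.sum_congr rfl
    intro k _
    simp [norm_mul, hζ k]

lemma phaseU_apply (ζ : Fin D → ℂ) (hζ : ∀ k, ‖ζ k‖ = 1) (u : EuclideanSpace ℂ (Fin D))
    (k : Fin D) : phaseU ζ hζ u k = ζ k * u k := rfl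

/-- Hadamard-type rotation on coordinates `a ≠ b`. -/
def hadU (a b : Fin D) (hab : a ≠ b) :
    EuclideanSpace ℂ (Fin D) ≃ₗᵢ[ℂ] EuclideanSpace ℂ (Fin D) where
  toLinearEquiv :=
  { toFun := fun u => WithLp.toLp 2 (fun k => if k = a then (u a + u b) / (Real.sqrt 2 : ℂ)
      else if k = b then (u a - u b) / (Real.sqrt 2 : ℂ) else u k)
    map_add' := by intro u v; ext k; by_cases h1 : k = a <;> by_cases h2 : k = b <;>
      simp [h1, h2, Ne.symm hab] <;> ring
    map_smul' := by intro c u; ext k; by_cases h1 : k = a <;> by_cases h2 : k = b <;>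
      simp [h1, h2, Ne.symm hab] <;> ring
    invFun := fun u => WithLp.toLp 2 (fun k => if k = a then (u a + u b) / (Real.sqrt 2 : ℂ)
      else if k = b then (u a - u b) / (Real.sqrt 2 : ℂ) else u k)
    left_inv := by
      intro u; ext k
      have h2 : ((Real.sqrt 2 : ℝ) : ℂ) * ((Real.sqrt 2 : ℝ) : ℂ) = 2 := by
        rw [← Complex.ofReal_mul, Real.mul_self_sqrt (by norm_num)]; norm_num
      have hne : ((Real.sqrt 2 : ℝ) : ℂ) ≠ 0 := by
        intro h; rw [h] at h2; simp at h2
      by_cases h1 : k = a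
      · subst h1; simp only [if_pos rfl, if_neg hab, if_neg (Ne.symm hab), ↓reduceIte]
        field_simp
        rw [sq, h2]; ring
      · by_cases hb : k = b
        · subst hb; simp only [if_neg (Ne.symm hab), if_pos rfl, if_neg hab, if_neg h1, ↓reduceIte]
          field_simp
          rw [sq, h2]; ring
        · simp [h1, hb]
    right_inv := by
      intro u; ext k
      have h2 : ((Real.sqrt 2 : ℝ) : ℂ) * ((Real.sqrt 2 : ℝ) : ℂ) = 2 := by
        rw [← Complex.ofReal_mul, Real.mul_self_sqrt (by norm_num)]; norm_num
      have hne : ((Real.sqrt 2 : ℝ) : ℂ) ≠ 0 := by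
        intro h; rw [h] at h2; simp at h2
      by_cases h1 : k = a
      · subst h1; simp only [if_pos rfl, if_neg hab, if_neg (Ne.symm hab), ↓reduceIte]
        field_simp
        rw [sq, h2]; ring
      · by_cases hb : k = b
        · subst hb; simp only [if_neg (Ne.symm hab), if_pos rfl, if_neg hab, if_neg h1, ↓reduceIte]
          field_simp
          rw [sq, h2]; ring
        · simp [h1, hb] }
  norm_map' := by
    intro u
    simp only [EuclideanSpace.norm_eq]
    congr 1
    apply sum_pair_congr a b hab _ _ _ (fun k hk1 hk2 => by
      simp [LinearEquiv.coe_mk, hk1, hk2])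
    have hs : ‖((Real.sqrt 2 : ℝ) : ℂ)‖ = Real.sqrt 2 := by
      rw [Complex.norm_real, Real.norm_eq_abs, abs_of_nonneg (Real.sqrt_nonneg 2)]
    have hpar := parallelogram_law_with_norm ℂ (u a) (u b)
    simp only [LinearEquiv.coe_mk, LinearMap.coe_mk, AddHom.coe_mk, WithLp.ofLp_toLp, if_pos rfl, if_neg hab, if_neg (Ne.symm hab),
      eq_self_iff_true, if_true]
    rw [norm_div, norm_div, hs, div_pow, div_pow, Real.sq_sqrt (by norm_num : (2:ℝ) ≥ 0)]
    nlinarith [sq_nonneg (‖u a + u b‖), sq_nonneg (‖u a - u b‖)]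

lemma hadU_apply_a (a b : Fin D) (hab : a ≠ b) (u : EuclideanSpace ℂ (Fin D)) :
    hadU a b hab u a = (u a + u b) / (Real.sqrt 2 : ℂ) := by
  simp [hadU]

lemma hadU_apply_b (a b : Fin D) (hab : a ≠ b) (u : EuclideanSpace ℂ (Fin D)) :
    hadU a b hab u b = (u a - u b) / (Real.sqrt 2 : ℂ) := by
  simp [hadU, Ne.symm hab]

/-- coordinate pair monomial `conj (u i) * u j`. -/
def cc (i j : Fin D) (u : EuclideanSpace ℂ (Fin D)) : ℂ := (starRingEnd ℂ) (u i) * u j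

/-- quartic monomial. -/
def mon (i j k l : Fin D) (u : EuclideanSpace ℂ (Fin D)) : ℂ := cc i j u * cc k l u

lemma continuous_coord (i : Fin D) : Continuous fun u : EuclideanSpace ℂ (Fin D) => u i :=
  (continuous_apply i).comp (PiLp.continuous_ofLp 2 _)

lemma continuous_cc (i j : Fin D) : Continuous (cc i j) :=
  ((Complex.continuous_conj.comp (continuous_coord i)).mul (continuous_coord j))

lemma continuous_mon (i j k l : Fin D) : Continuous (mon i j k l) :=
  (continuous_cc i j).mul (continuous_cc k l)

lemma coord_le (u : EuclideanSpace ℂ (Fin D)) (i : Fin D) : ‖u i‖ ≤ ‖u‖ := by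
  have h1 : ‖u i‖ ^ 2 ≤ ∑ k, ‖u k‖ ^ 2 :=
    Finset.single_le_sum (f := fun k => ‖u k‖ ^ 2) (fun k _ => sq_nonneg _) (Finset.mem_univ i)
  calc ‖u i‖ = Real.sqrt (‖u i‖ ^ 2) := (Real.sqrt_sq (norm_nonneg _)).symm
    _ ≤ Real.sqrt (∑ k, ‖u k‖ ^ 2) := Real.sqrt_le_sqrt h1
    _ = ‖u‖ := (EuclideanSpace.norm_eq u).symm

lemma norm_cc_le (i j : Fin D) (u : EuclideanSpace ℂ (Fin D)) (h : ‖u‖ = 1) :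
    ‖cc i j u‖ ≤ 1 := by
  have hi := coord_le u i; have hj := coord_le u j
  rw [h] at hi hj
  calc ‖cc i j u‖ = ‖u i‖ * ‖u j‖ := by
        rw [cc, norm_mul, RCLike.norm_conj]
    _ ≤ 1 := mul_le_one₀ hi (norm_nonneg _) hj

lemma norm_mon_le (i j k l : Fin D) (u : EuclideanSpace ℂ (Fin D)) (h : ‖u‖ = 1) :
    ‖mon i j k l u‖ ≤ 1 := by
  rw [mon, norm_mul]
  exact mul_le_one₀ (norm_cc_le i j u h) (norm_nonneg _) (norm_cc_le k l u h)

lemma sum_cc_diag (u : EuclideanSpace ℂ (Fin D)) (hu : ‖u‖ = 1) :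
    ∑ k, cc k k u = 1 := by
  have key : ∀ z : ℂ, (starRingEnd ℂ) z * z = ((‖z‖ ^ 2 : ℝ) : ℂ) := by
    intro z
    rw [mul_comm, Complex.mul_conj]
    norm_cast
    rw [← Complex.sq_norm]
  have hs : ∑ k, ‖u k‖ ^ 2 = 1 := by
    have h := EuclideanSpace.norm_eq u
    rw [hu] at h
    have h0 : (0:ℝ) ≤ ∑ k, ‖u k‖ ^ 2 :=
      Finset.sum_nonneg fun k _ => sq_nonneg _
    nlinarith [Real.sq_sqrt h0]
  calc ∑ k, cc k k u = ∑ k, ((‖u k‖ ^ 2 : ℝ) : ℂ) := by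
        apply Finset.sum_congr rfl; intro k _; rw [cc, key]
    _ = ((∑ k, ‖u k‖ ^ 2 : ℝ) : ℂ) := by push_cast; ring
    _ = 1 := by rw [hs]; norm_num

variable (μ : Measure (EuclideanSpace ℂ (Fin D))) [IsProbabilityMeasure μ]

lemma integ_of_bdd {f : EuclideanSpace ℂ (Fin D) → ℂ} (hf : Continuous f) (C : ℝ)
    (hsupp : ∀ᵐ u ∂μ, ‖u‖ = 1) (hC : ∀ u, ‖u‖ = 1 → ‖f u‖ ≤ C) : Integrable f μ := by
  refine Integrable.mono' (integrable_const C) hf.aestronglyMeasurable ?_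
  filter_upwards [hsupp] with u hu
  exact hC u hu

variable (hsupp : ∀ᵐ u ∂μ, ‖u‖ = 1)

include hsupp in
lemma integ_cc (i j : Fin D) : Integrable (cc i j) μ :=
  integ_of_bdd μ (continuous_cc i j) 1 hsupp (norm_cc_le i j)

include hsupp in
lemma integ_mon (i j k l : Fin D) : Integrable (mon i j k l) μ :=
  integ_of_bdd μ (continuous_mon i j k l) 1 hsupp (norm_mon_le i j k l)

variable (hinv : ∀ U : EuclideanSpace ℂ (Fin D) ≃ₗᵢ[ℂ] EuclideanSpace ℂ (Fin D), μ.map U = μ)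

include hinv in
lemma inv_integral (U : EuclideanSpace ℂ (Fin D) ≃ₗᵢ[ℂ] EuclideanSpace ℂ (Fin D))
    {f : EuclideanSpace ℂ (Fin D) → ℂ} (hf : Continuous f) :
    ∫ u, f (U u) ∂μ = ∫ u, f u ∂μ := by
  rw [← integral_map U.continuous.measurable.aemeasurable
    (by rw [hinv U]; exact hf.aestronglyMeasurable), hinv U]

lemma eq_zero_of_eq_mul (x c : ℂ) (h : x = c * x) (hc : c ≠ 1) : x = 0 := by
  have h2 : (1 - c) * x = 0 := by linear_combination h
  rcases mul_eq_zero.1 h2 with h3 | h3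
  · exact absurd (by linear_combination -h3) hc
  · exact h3

include hinv in
lemma integral_mon_phase (i j k l p : Fin D) :
    ∫ u, mon i j k l u ∂μ =
      ((if j = p then Complex.I else 1) * (if l = p then Complex.I else 1) *
        ((starRingEnd ℂ) (if i = p then Complex.I else 1) *
         (starRingEnd ℂ) (if k = p then Complex.I else 1))) *
      ∫ u, mon i j k l u ∂μ := by
  set ζ : Fin D → ℂ := fun q => if q = p then Complex.I else 1 with hζdef
  have hζ : ∀ q, ‖ζ q‖ = 1 := fun q => by by_cases h : q = p <;> simp [hζdef, h]
  have h1 : ∫ u, mon i j k l (phaseU ζ hζ u) ∂μ = ∫ u, mon i j k l u ∂μ :=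
    inv_integral μ hinv (phaseU ζ hζ) (continuous_mon i j k l)
  have h2 : ∀ u, mon i j k l (phaseU ζ hζ u) =
      ((if j = p then Complex.I else 1) * (if l = p then Complex.I else 1) *
        ((starRingEnd ℂ) (if i = p then Complex.I else 1) *
         (starRingEnd ℂ) (if k = p then Complex.I else 1))) * mon i j k l u := by
    intro u
    simp only [mon, cc, phaseU_apply, _root_.map_mul, hζdef]
    ring
  have h3 : ∫ u, mon i j k l (phaseU ζ hζ u) ∂μ =
      ((if j = p then Complex.I else 1) * (if l = p then Complex.I else 1) *
        ((starRingEnd ℂ) (if i = p then Complex.I else 1) *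
         (starRingEnd ℂ) (if k = p then Complex.I else 1))) * ∫ u, mon i j k l u ∂μ := by
    simp_rw [h2]
    exact integral_const_mul _ _
  exact h1.symm.trans h3

include hinv in
lemma mon_vanish (i j k l : Fin D) (h1 : ¬(i = j ∧ k = l)) (h2 : ¬(i = l ∧ k = j)) :
    ∫ u, mon i j k l u ∂μ = 0 := by
  by_cases hij : i = j
  · subst hij
    have hkl : k ≠ l := fun h => h1 ⟨rfl, h⟩
    rcases eq_or_ne i k with hik | hik
    · subst hik
      have h := integral_mon_phase μ hinv i i i l i
      have e1 : ¬ l = i := fun hh => hkl hh.symm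
      simp only [eq_self_iff_true, if_true, if_neg e1, Complex.conj_I] at h
      exact eq_zero_of_eq_mul _ _ h (by norm_num [Complex.ext_iff])
    · have h := integral_mon_phase μ hinv i i k l k
      have e1 : ¬ i = k := hik
      have e2 : ¬ l = k := fun hh => hkl hh.symm
      simp only [eq_self_iff_true, if_true, if_neg e1, if_neg e2, Complex.conj_I,
        _root_.map_one] at h
      exact eq_zero_of_eq_mul _ _ h (by norm_num [Complex.ext_iff])
  · by_cases hli : l = i
    · subst hli
      -- integral is ∫ mon l j k l, with hij : ¬ l = j
      have hkj : k ≠ j := fun h => h2 ⟨rfl, h⟩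
      have e0 : ¬ j = k := fun hh => hkj hh.symm
      rcases eq_or_ne k l with hkl | hkl
      · subst hkl
        have h := integral_mon_phase μ hinv k j k k k
        simp only [eq_self_iff_true, if_true, if_neg e0, Complex.conj_I] at h
        exact eq_zero_of_eq_mul _ _ h (by norm_num [Complex.ext_iff])
      · have h := integral_mon_phase μ hinv l j k l k
        have e2 : ¬ l = k := fun hh => hkl hh.symm
        simp only [eq_self_iff_true, if_true, if_neg e0, if_neg e2, Complex.conj_I,
          _root_.map_one] at h
        exact eq_zero_of_eq_mul _ _ h (by norm_num [Complex.ext_iff])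
    · rcases eq_or_ne k i with hki | hki
      · subst hki
        -- integral is ∫ mon k j k l
        have h := integral_mon_phase μ hinv k j k l k
        have e0 : ¬ j = k := fun hh => hij hh.symm
        have e1 : ¬ l = k := hli
        simp only [eq_self_iff_true, if_true, if_neg e0, if_neg e1, Complex.conj_I] at h
        exact eq_zero_of_eq_mul _ _ h (by norm_num [Complex.ext_iff])
      · have h := integral_mon_phase μ hinv i j k l i
        have e0 : ¬ j = i := fun hh => hij hh.symm
        have e1 : ¬ l = i := hli
        have e2 : ¬ k = i := hki
        simp only [eq_self_iff_true, if_true, if_neg e0, if_neg e1, if_neg e2, Complex.conj_I,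
          _root_.map_one] at h
        exact eq_zero_of_eq_mul _ _ h (by norm_num [Complex.ext_iff])

include hinv in
lemma cc_vanish (i j : Fin D) (hij : i ≠ j) : ∫ u, cc i j u ∂μ = 0 := by
  set ζ : Fin D → ℂ := fun q => if q = i then Complex.I else 1 with hζdef
  have hζ : ∀ q, ‖ζ q‖ = 1 := fun q => by by_cases h : q = i <;> simp [hζdef, h]
  have h1 : ∫ u, cc i j (phaseU ζ hζ u) ∂μ = ∫ u, cc i j u ∂μ :=
    inv_integral μ hinv (phaseU ζ hζ) (continuous_cc i j)
  have h2 : ∀ u, cc i j (phaseU ζ hζ u) = (-Complex.I) * cc i j u := by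
    intro u
    have e : cc i j (phaseU ζ hζ u) = (starRingEnd ℂ) (ζ i * u i) * (ζ j * u j) := rfl
    rw [e, hζdef]
    beta_reduce
    rw [if_pos rfl, if_neg (Ne.symm hij), _root_.map_mul, Complex.conj_I]
    rw [cc]
    ring
  have h3 : ∫ u, cc i j (phaseU ζ hζ u) ∂μ = (-Complex.I) * ∫ u, cc i j u ∂μ := by
    simp_rw [h2]
    exact integral_const_mul _ _
  have h : ∫ u, cc i j u ∂μ = (-Complex.I) * ∫ u, cc i j u ∂μ := h1.symm.trans h3
  exact eq_zero_of_eq_mul _ (-Complex.I) h (by norm_num [Complex.ext_iff])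

lemma perm_coord (σ : Equiv.Perm (Fin D)) (u : EuclideanSpace ℂ (Fin D)) (q : Fin D) :
    (LinearIsometryEquiv.piLpCongrLeft 2 ℂ ℂ σ) u (σ q) = u q := by
  rw [LinearIsometryEquiv.piLpCongrLeft_apply]
  exact congrArg u (Equiv.symm_apply_apply σ q)

include hinv in
lemma integral_mon_perm (σ : Equiv.Perm (Fin D)) (i j k l : Fin D) :
    ∫ u, mon (σ i) (σ j) (σ k) (σ l) u ∂μ = ∫ u, mon i j k l u ∂μ := by
  have h := inv_integral μ hinv
    (LinearIsometryEquiv.piLpCongrLeft 2 ℂ ℂ σ) (continuous_mon (σ i) (σ j) (σ k) (σ l))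
  rw [← h]
  congr 1
  funext u
  simp only [mon, cc, perm_coord]

include hinv in
lemma integral_cc_perm (σ : Equiv.Perm (Fin D)) (i j : Fin D) :
    ∫ u, cc (σ i) (σ j) u ∂μ = ∫ u, cc i j u ∂μ := by
  have h := inv_integral μ hinv
    (LinearIsometryEquiv.piLpCongrLeft 2 ℂ ℂ σ) (continuous_cc (σ i) (σ j))
  rw [← h]
  congr 1
  funext u
  simp only [cc, perm_coord]

include hsupp hinv in
lemma n_diag (i : Fin D) : ∫ u, cc i i u ∂μ = 1 / (D : ℂ) := by
  have hall : ∀ i' : Fin D, ∫ u, cc i' i' u ∂μ = ∫ u, cc i i u ∂μ := by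
    intro i'
    have h := integral_cc_perm μ hinv (Equiv.swap i' i) i' i'
    rw [Equiv.swap_apply_left] at h
    exact h.symm
  have hsum : ∑ i' : Fin D, ∫ u, cc i' i' u ∂μ = 1 := by
    rw [← integral_finset_sum _ (fun i' _ => integ_cc μ hsupp i' i')]
    have h : ∫ u, ∑ i' : Fin D, cc i' i' u ∂μ = ∫ _u, (1 : ℂ) ∂μ := by
      apply integral_congr_ae
      filter_upwards [hsupp] with u hu
      exact sum_cc_diag u hu
    rw [h, integral_const]
    simp
  have hD : (D:ℂ) ≠ 0 := by
    have h0 : 0 < D := i.pos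
    exact_mod_cast Nat.cast_ne_zero.2 (Nat.pos_iff_ne_zero.1 h0)
  have hcount : ∑ i' : Fin D, ∫ u, cc i' i' u ∂μ = (D:ℂ) * ∫ u, cc i i u ∂μ := by
    rw [Finset.sum_congr rfl (fun i' _ => hall i'), Finset.sum_const, Finset.card_univ,
      Fintype.card_fin, nsmul_eq_mul]
  rw [hcount] at hsum
  rw [eq_div_iff hD]
  linear_combination hsum

include hsupp in
lemma sum_mon_row (i : Fin D) :
    ∑ k : Fin D, ∫ u, mon i i k k u ∂μ = ∫ u, cc i i u ∂μ := by
  rw [← integral_finset_sum _ (fun k _ => integ_mon μ hsupp i i k k)]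
  apply integral_congr_ae
  filter_upwards [hsupp] with u hu
  calc ∑ k, mon i i k k u = cc i i u * ∑ k, cc k k u := by
        rw [Finset.mul_sum]
        exact Finset.sum_congr rfl fun k _ => rfl
    _ = cc i i u := by rw [sum_cc_diag u hu, mul_one]

include hsupp hinv in
lemma mon_quartic_eq (a b : Fin D) (hab : a ≠ b) :
    ∫ u, mon a a a a u ∂μ = 2 * ∫ u, mon a a b b u ∂μ := by
  have h2 : ((Real.sqrt 2 : ℝ) : ℂ) * ((Real.sqrt 2 : ℝ) : ℂ) = 2 := by
    rw [← Complex.ofReal_mul, Real.mul_self_sqrt (by norm_num)]; norm_num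
  have hv : ∀ u : EuclideanSpace ℂ (Fin D), cc a a (hadU a b hab u) =
      (cc a a u + cc a b u + cc b a u + cc b b u) / 2 := by
    intro u
    have e : cc a a (hadU a b hab u) =
        (starRingEnd ℂ) (hadU a b hab u a) * (hadU a b hab u a) := rfl
    rw [e, hadU_apply_a, map_div₀, _root_.map_add, Complex.conj_ofReal, div_mul_div_comm, h2]
    simp only [cc]
    ring
  set t : Fin 4 → Fin D × Fin D := ![(a,a),(a,b),(b,a),(b,b)] with ht
  have hbig : ∀ u : EuclideanSpace ℂ (Fin D), mon a a a a (hadU a b hab u) =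
      (1/4 : ℂ) * ∑ p : Fin 4, ∑ q : Fin 4, mon (t p).1 (t p).2 (t q).1 (t q).2 u := by
    intro u
    have e : mon a a a a (hadU a b hab u) =
        cc a a (hadU a b hab u) * cc a a (hadU a b hab u) := rfl
    rw [e, hv]
    simp [ht, Fin.sum_univ_four, mon]
    try ring
  have h1 : ∫ u, mon a a a a (hadU a b hab u) ∂μ = ∫ u, mon a a a a u ∂μ :=
    inv_integral μ hinv (hadU a b hab) (continuous_mon a a a a)
  have I : ∀ i j k l : Fin D, Integrable (mon i j k l) μ := fun i j k l =>
    integ_mon μ hsupp i j k l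
  have key : ∫ u, mon a a a a u ∂μ = (1/4 : ℂ) *
      ∑ p : Fin 4, ∑ q : Fin 4, ∫ u, mon (t p).1 (t p).2 (t q).1 (t q).2 u ∂μ := by
    rw [← h1]
    simp_rw [hbig]
    rw [integral_const_mul,
      integral_finset_sum _ (fun p _ => integrable_finset_sum _ (fun q _ => I _ _ _ _))]
    congr 1
    exact Finset.sum_congr rfl (fun p _ => integral_finset_sum _ (fun q _ => I _ _ _ _))
  simp only [ht] at key
  simp [Fin.sum_univ_four] at key
  have z1 : ∫ u, mon a a a b u ∂μ = 0 :=
    mon_vanish μ hinv a a a b (by simp [hab, Ne.symm hab]) (by simp [hab, Ne.symm hab])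
  have z2 : ∫ u, mon a a b a u ∂μ = 0 :=
    mon_vanish μ hinv a a b a (by simp [hab, Ne.symm hab]) (by simp [hab, Ne.symm hab])
  have z3 : ∫ u, mon a b a a u ∂μ = 0 :=
    mon_vanish μ hinv a b a a (by simp [hab, Ne.symm hab]) (by simp [hab, Ne.symm hab])
  have z4 : ∫ u, mon a b a b u ∂μ = 0 :=
    mon_vanish μ hinv a b a b (by simp [hab, Ne.symm hab]) (by simp [hab, Ne.symm hab])
  have z5 : ∫ u, mon a b b b u ∂μ = 0 :=
    mon_vanish μ hinv a b b b (by simp [hab, Ne.symm hab]) (by simp [hab, Ne.symm hab])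
  have z6 : ∫ u, mon b a a a u ∂μ = 0 :=
    mon_vanish μ hinv b a a a (by simp [hab, Ne.symm hab]) (by simp [hab, Ne.symm hab])
  have z7 : ∫ u, mon b a b a u ∂μ = 0 :=
    mon_vanish μ hinv b a b a (by simp [hab, Ne.symm hab]) (by simp [hab, Ne.symm hab])
  have z8 : ∫ u, mon b a b b u ∂μ = 0 :=
    mon_vanish μ hinv b a b b (by simp [hab, Ne.symm hab]) (by simp [hab, Ne.symm hab])
  have z9 : ∫ u, mon b b a b u ∂μ = 0 :=
    mon_vanish μ hinv b b a b (by simp [hab, Ne.symm hab]) (by simp [hab, Ne.symm hab])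
  have z10 : ∫ u, mon b b b a u ∂μ = 0 :=
    mon_vanish μ hinv b b b a (by simp [hab, Ne.symm hab]) (by simp [hab, Ne.symm hab])
  have jeq1 : ∫ u, mon a b b a u ∂μ = ∫ u, mon a a b b u ∂μ := by
    apply integral_congr_ae
    filter_upwards with u
    simp only [mon, cc]; ring
  have jeq2 : ∫ u, mon b a a b u ∂μ = ∫ u, mon a a b b u ∂μ := by
    apply integral_congr_ae
    filter_upwards with u
    simp only [mon, cc]; ring
  have jeq3 : ∫ u, mon b b a a u ∂μ = ∫ u, mon a a b b u ∂μ := by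
    apply integral_congr_ae
    filter_upwards with u
    simp only [mon, cc]; ring
  have hswap : ∫ u, mon b b b b u ∂μ = ∫ u, mon a a a a u ∂μ := by
    have h := integral_mon_perm μ hinv (Equiv.swap a b) a a a a
    rw [Equiv.swap_apply_left] at h
    exact h
  rw [z1, z2, z3, z4, z5, z6, z7, z8, z9, z10, jeq1, jeq2, jeq3, hswap] at key
  linear_combination 2 * key

include hsupp hinv in
lemma mon_offdiag (i k : Fin D) (hik : i ≠ k) :
    ∫ u, mon i i k k u ∂μ = 1 / ((D : ℂ) * ((D : ℂ) + 1)) := by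
  have hDpos : 0 < D := i.pos
  have hD : (D:ℂ) ≠ 0 := Nat.cast_ne_zero.2 (Nat.pos_iff_ne_zero.1 hDpos)
  have hD1 : (D:ℂ) + 1 ≠ 0 := by
    have : ((D + 1 : ℕ) : ℂ) ≠ 0 := Nat.cast_ne_zero.2 (Nat.succ_ne_zero D)
    simpa using this
  have hconst : ∀ k', k' ≠ i → ∫ u, mon i i k' k' u ∂μ = ∫ u, mon i i k k u ∂μ := by
    intro k' hk'
    rcases eq_or_ne k' k with h | h
    · rw [h]
    · have hperm := integral_mon_perm μ hinv (Equiv.swap k' k) i i k' k'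
      simp only [Equiv.swap_apply_left,
        Equiv.swap_apply_of_ne_of_ne (Ne.symm hk') hik] at hperm
      exact hperm.symm
  have hq : ∫ u, mon i i i i u ∂μ = 2 * ∫ u, mon i i k k u ∂μ :=
    mon_quartic_eq μ hsupp hinv i k hik
  have hsum : ∑ k' : Fin D, ∫ u, mon i i k' k' u ∂μ = 1 / (D : ℂ) := by
    rw [sum_mon_row μ hsupp i, n_diag μ hsupp hinv i]
  rw [← Finset.add_sum_erase _ _ (Finset.mem_univ i)] at hsum
  have herase : ∑ k' ∈ (Finset.univ : Finset (Fin D)).erase i, ∫ u, mon i i k' k' u ∂μ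
      = ((D : ℂ) - 1) * ∫ u, mon i i k k u ∂μ := by
    rw [Finset.sum_congr rfl (fun k' hk' => hconst k' (Finset.mem_erase.1 hk').1),
      Finset.sum_const, Finset.card_erase_of_mem (Finset.mem_univ i), Finset.card_univ,
      Fintype.card_fin, nsmul_eq_mul]
    rw [Nat.cast_sub hDpos]
    norm_num
  rw [herase, hq] at hsum
  field_simp at hsum ⊢
  linear_combination hsum

include hsupp hinv in
lemma mon_quartic (i : Fin D) :
    ∫ u, mon i i i i u ∂μ = 2 / ((D : ℂ) * ((D : ℂ) + 1)) := by
  by_cases h : ∃ k, k ≠ i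
  · obtain ⟨k, hk⟩ := h
    rw [mon_quartic_eq μ hsupp hinv i k (Ne.symm hk), mon_offdiag μ hsupp hinv i k (Ne.symm hk)]
    ring
  · push_neg at h
    have hD : D = 1 := by
      have huniv : (Finset.univ : Finset (Fin D)) = {i} := by
        ext k; simp [h k]
      have := congrArg Finset.card huniv
      simpa [Finset.card_univ] using this
    have hsum : ∑ k' : Fin D, ∫ u, mon i i k' k' u ∂μ = 1 / (D : ℂ) := by
      rw [sum_mon_row μ hsupp i, n_diag μ hsupp hinv i]
    have huniv : (Finset.univ : Finset (Fin D)) = {i} := by ext k; simp [h k]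
    rw [huniv, Finset.sum_singleton] at hsum
    rw [hsum, hD]
    norm_num

include hsupp hinv in
lemma m_eval (i j k l : Fin D) :
    ∫ u, mon i j k l u ∂μ =
      ((if i = j then (1:ℂ) else 0) * (if k = l then (1:ℂ) else 0) +
       (if i = l then (1:ℂ) else 0) * (if k = j then (1:ℂ) else 0)) /
      ((D : ℂ) * ((D : ℂ) + 1)) := by
  by_cases hA : i = j ∧ k = l
  · obtain ⟨hij, hkl⟩ := hA
    subst hij; subst hkl
    rcases eq_or_ne i k with hik | hik
    · subst hik
      simp only [if_pos rfl]
      rw [mon_quartic μ hsupp hinv i]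
      norm_num
    · simp only [if_pos rfl, if_neg hik, if_neg (Ne.symm hik)]
      rw [mon_offdiag μ hsupp hinv i k hik]
      norm_num
  · by_cases hB : i = l ∧ k = j
    · obtain ⟨hil, hkj⟩ := hB
      subst hil; subst hkj
      -- now goal about mon i k k i  (with j := k, l := i)
      have hik : i ≠ k := fun h => hA ⟨h, h.symm⟩
      have e : ∫ u, mon i k k i u ∂μ = ∫ u, mon i i k k u ∂μ := by
        apply integral_congr_ae
        filter_upwards with u
        simp only [mon, cc]; ring
      rw [e, mon_offdiag μ hsupp hinv i k hik]
      simp only [if_pos rfl, if_neg hik, if_neg (Ne.symm hik)]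
      norm_num
    · have e1 : (if i = j then (1:ℂ) else 0) * (if k = l then (1:ℂ) else 0) = 0 := by
        by_cases h : i = j
        · simp [h, show ¬ k = l from fun hh => hA ⟨h, hh⟩]
        · simp [h]
      have e2 : (if i = l then (1:ℂ) else 0) * (if k = j then (1:ℂ) else 0) = 0 := by
        by_cases h : i = l
        · simp [h, show ¬ k = j from fun hh => hB ⟨h, hh⟩]
        · simp [h]
      rw [mon_vanish μ hinv i j k l hA hB, e1, e2]
      norm_num

include hsupp hinv in
lemma n_eval (i j : Fin D) :
    ∫ u, cc i j u ∂μ = (if i = j then (1:ℂ) else 0) / (D : ℂ) := by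
  rcases eq_or_ne i j with h | h
  · subst h
    rw [n_diag μ hsupp hinv i, if_pos rfl]
  · rw [cc_vanish μ hinv i j h, if_neg h]
    norm_num

lemma expval_expand (A : Matrix (Fin D) (Fin D) ℂ) (u : EuclideanSpace ℂ (Fin D)) :
    expval A u = ∑ p : Fin D × Fin D, A p.1 p.2 * cc p.1 p.2 u := by
  rw [Fintype.sum_prod_type]
  have h : expval A u = ∑ i, ∑ j, (starRingEnd ℂ) (u i) * (A i j * u j) := by
    simp [expval, PiLp.inner_apply, Matrix.toEuclideanLin_apply, Matrix.mulVec,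
      dotProduct, Finset.mul_sum]
    exact Finset.sum_congr rfl fun i _ => by
      rw [Finset.sum_mul]; exact Finset.sum_congr rfl fun j _ => by ring
  rw [h]
  apply Finset.sum_congr rfl
  intro i _
  apply Finset.sum_congr rfl
  intro j _
  rw [cc]
  ring

lemma continuous_expval (A : Matrix (Fin D) (Fin D) ℂ) : Continuous (expval A) := by
  have h : expval A = fun u => ∑ p : Fin D × Fin D, A p.1 p.2 * cc p.1 p.2 u :=
    funext (expval_expand A)
  rw [h]
  exact continuous_finset_sum _ fun p _ => continuous_const.mul (continuous_cc p.1 p.2)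

lemma trace_eval (M : Matrix (Fin D) (Fin D) ℂ) :
    ∑ p : Fin D × Fin D, M p.1 p.2 * (if p.1 = p.2 then (1:ℂ) else 0) = M.trace := by
  rw [Fintype.sum_prod_type]
  simp [Matrix.trace, Matrix.diag, mul_ite, mul_one, mul_zero, Finset.sum_ite_eq,
    Finset.sum_ite_eq']

include hsupp hinv in
lemma main_calc (hD : 0 < D) (ρ O : Matrix (Fin D) (Fin D) ℂ) :
    ∫ u, ((D:ℂ) * expval ρ u) * (((D:ℂ) + 1) * expval O u - O.trace) ∂μ
      = (O * ρ).trace := by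
  have hD0 : (D:ℂ) ≠ 0 := Nat.cast_ne_zero.2 hD.ne'
  have hD1 : (D:ℂ) + 1 ≠ 0 := by
    have h := Nat.cast_ne_zero (R := ℂ).2 (Nat.succ_ne_zero D)
    push_cast at h
    exact h
  have hsplit : (fun u => ((D:ℂ) * expval ρ u) * (((D:ℂ) + 1) * expval O u - O.trace)) =
      fun u => (∑ p : Fin D × Fin D, ∑ q : Fin D × Fin D,
          ((D:ℂ) * ((D:ℂ)+1) * ρ p.1 p.2 * O q.1 q.2) * mon p.1 p.2 q.1 q.2 u)
        - (∑ p : Fin D × Fin D, ((D:ℂ) * O.trace * ρ p.1 p.2) * cc p.1 p.2 u) := by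
    funext u
    rw [expval_expand ρ, expval_expand O]
    rw [Finset.mul_sum, Finset.sum_mul, ← Finset.sum_sub_distrib]
    apply Finset.sum_congr rfl
    intro p _
    rw [mul_sub, Finset.mul_sum, Finset.mul_sum]
    congr 1
    · apply Finset.sum_congr rfl
      intro q _
      simp only [mon]
      ring
    · ring
  rw [hsplit]
  have Ibig : Integrable (fun u => ∑ p : Fin D × Fin D, ∑ q : Fin D × Fin D,
      ((D:ℂ) * ((D:ℂ)+1) * ρ p.1 p.2 * O q.1 q.2) * mon p.1 p.2 q.1 q.2 u) μ :=
    integrable_finset_sum _ fun p _ => integrable_finset_sum _ fun q _ =>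
      (integ_mon μ hsupp p.1 p.2 q.1 q.2).const_mul _
  have Ismall : Integrable (fun u => ∑ p : Fin D × Fin D,
      ((D:ℂ) * O.trace * ρ p.1 p.2) * cc p.1 p.2 u) μ :=
    integrable_finset_sum _ fun p _ => (integ_cc μ hsupp p.1 p.2).const_mul _
  rw [integral_sub Ibig Ismall]
  rw [integral_finset_sum _ (fun p _ => integrable_finset_sum _ fun q _ =>
      (integ_mon μ hsupp p.1 p.2 q.1 q.2).const_mul _),
    integral_finset_sum _ (fun p _ => (integ_cc μ hsupp p.1 p.2).const_mul _)]
  have e1 : ∀ p : Fin D × Fin D, ∫ u, ∑ q : Fin D × Fin D,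
      ((D:ℂ) * ((D:ℂ)+1) * ρ p.1 p.2 * O q.1 q.2) * mon p.1 p.2 q.1 q.2 u ∂μ
      = ∑ q : Fin D × Fin D, (ρ p.1 p.2 * O q.1 q.2 *
          ((if p.1 = p.2 then (1:ℂ) else 0) * (if q.1 = q.2 then (1:ℂ) else 0)) +
        ρ p.1 p.2 * O q.1 q.2 *
          ((if p.1 = q.2 then (1:ℂ) else 0) * (if q.1 = p.2 then (1:ℂ) else 0))) := by
    intro p
    rw [integral_finset_sum _ (fun q _ => (integ_mon μ hsupp p.1 p.2 q.1 q.2).const_mul _)]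
    apply Finset.sum_congr rfl
    intro q _
    have hcancel : ∀ x : ℂ, ((D:ℂ) * ((D:ℂ)+1) * ρ p.1 p.2 * O q.1 q.2) *
        (x / ((D:ℂ) * ((D:ℂ)+1))) = ρ p.1 p.2 * O q.1 q.2 * x := by
      intro x; field_simp
    rw [integral_const_mul, m_eval μ hsupp hinv, hcancel, mul_add]
  have e2 : ∀ p : Fin D × Fin D, ∫ u, ((D:ℂ) * O.trace * ρ p.1 p.2) * cc p.1 p.2 u ∂μ
      = O.trace * (ρ p.1 p.2 * (if p.1 = p.2 then (1:ℂ) else 0)) := by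
    intro p
    have hcancel : ∀ x : ℂ, ((D:ℂ) * O.trace * ρ p.1 p.2) * (x / (D:ℂ))
        = O.trace * (ρ p.1 p.2 * x) := by
      intro x; field_simp
    rw [integral_const_mul, n_eval μ hsupp hinv, hcancel]
  rw [Finset.sum_congr rfl fun p _ => e1 p, Finset.sum_congr rfl fun p _ => e2 p]
  have hsplit2 : ∑ p : Fin D × Fin D, ∑ q : Fin D × Fin D, (ρ p.1 p.2 * O q.1 q.2 *
          ((if p.1 = p.2 then (1:ℂ) else 0) * (if q.1 = q.2 then (1:ℂ) else 0)) +
        ρ p.1 p.2 * O q.1 q.2 *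
          ((if p.1 = q.2 then (1:ℂ) else 0) * (if q.1 = p.2 then (1:ℂ) else 0)))
      = ρ.trace * O.trace + (O * ρ).trace := by
    rw [Finset.sum_congr rfl fun p _ => Finset.sum_add_distrib, Finset.sum_add_distrib]
    congr 1
    · have hfact : ∀ p : Fin D × Fin D, ∑ q : Fin D × Fin D, ρ p.1 p.2 * O q.1 q.2 *
          ((if p.1 = p.2 then (1:ℂ) else 0) * (if q.1 = q.2 then (1:ℂ) else 0))
          = (ρ p.1 p.2 * (if p.1 = p.2 then (1:ℂ) else 0)) *
            ∑ q : Fin D × Fin D, O q.1 q.2 * (if q.1 = q.2 then (1:ℂ) else 0) := by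
        intro p
        rw [Finset.mul_sum]
        apply Finset.sum_congr rfl
        intro q _
        ring
      rw [Finset.sum_congr rfl fun p _ => hfact p, ← Finset.sum_mul, trace_eval,
        trace_eval]
    · rw [Matrix.trace_mul_comm]
      have : (ρ * O).trace = ∑ i : Fin D, ∑ j : Fin D, ρ i j * O j i := by
        simp [Matrix.trace, Matrix.diag, Matrix.mul_apply]
      rw [this, Fintype.sum_prod_type]
      apply Finset.sum_congr rfl
      intro i _
      apply Finset.sum_congr rfl
      intro j _
      rw [Fintype.sum_prod_type]
      simp [mul_ite, mul_one, mul_zero, Finset.sum_ite_eq, Finset.sum_ite_eq']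
  rw [hsplit2]
  have hsmall : ∑ p : Fin D × Fin D, O.trace * (ρ p.1 p.2 * (if p.1 = p.2 then (1:ℂ) else 0))
      = O.trace * ρ.trace := by
    rw [← Finset.mul_sum, trace_eval]
  rw [hsmall]
  ring

end ShadowAux
end ShadowAux

open scoped NNReal ENNReal in
/-- unbiasedness of the classical-shadow estimator, Lemma 1 of the paper:
let `μ` be the rotation-invariant probability measure on the unit sphere of `ℂ^D`,
`ρ` a density matrix, and `ν` the Born measure with density `u ↦ D·⟨u, ρ u⟩` w.r.t. `μ`.
Then for every Hermitian `O`, `∫ ((D+1)·⟨u,Ou⟩ − tr O) dν(u) = tr (O ρ)`. -/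
theorem shadow_estimator_unbiased (D : ℕ) (hD : 1 ≤ D)
    (μ : Measure (EuclideanSpace ℂ (Fin D))) [IsProbabilityMeasure μ]
    (hsupp : ∀ᵐ u ∂μ, ‖u‖ = 1)
    (hinv : ∀ U : EuclideanSpace ℂ (Fin D) ≃ₗᵢ[ℂ] EuclideanSpace ℂ (Fin D),
      μ.map U = μ)
    (ρ : Matrix (Fin D) (Fin D) ℂ) (hρ : ρ.PosSemidef) (hρtr : ρ.trace = 1)
    (ν : Measure (EuclideanSpace ℂ (Fin D))) [IsProbabilityMeasure ν]
    (hν : ν = μ.withDensity fun u => ENNReal.ofReal ((D : ℝ) * (expval ρ u).re))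
    (O : Matrix (Fin D) (Fin D) ℂ) (hO : O.IsHermitian) :
    ∫ u, (((D : ℂ) + 1) * expval O u - O.trace) ∂ν = (O * ρ).trace := by
  have hdot : ∀ u : EuclideanSpace ℂ (Fin D), expval ρ u
      = dotProduct (star fun i => u i) (ρ.mulVec fun i => u i) := by
    intro u
    simp [expval, PiLp.inner_apply, Matrix.toEuclideanLin_apply, Matrix.mulVec,
      dotProduct, Finset.mul_sum]
    exact Finset.sum_congr rfl fun i _ => by
      rw [Finset.sum_mul]; exact Finset.sum_congr rfl fun j _ => by ring
  have hpos : ∀ u : EuclideanSpace ℂ (Fin D), (expval ρ u).im = 0 ∧ 0 ≤ (expval ρ u).re := by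
    intro u
    have h := hρ.dotProduct_mulVec_nonneg (fun i => u i)
    rw [← hdot u] at h
    rw [Complex.le_def] at h
    exact ⟨by simpa using h.2.symm, by simpa using h.1⟩
  have hmeas : Measurable fun u : EuclideanSpace ℂ (Fin D) =>
      ((D:ℝ) * (expval ρ u).re).toNNReal :=
    ((continuous_const.mul
      (Complex.continuous_re.comp (ShadowAux.continuous_expval ρ))).measurable).real_toNNReal
  rw [hν]
  rw [show (fun u : EuclideanSpace ℂ (Fin D) => ENNReal.ofReal ((D : ℝ) * (expval ρ u).re)) =
      fun u : EuclideanSpace ℂ (Fin D) =>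
        ((((D:ℝ) * (expval ρ u).re).toNNReal : ℝ≥0) : ℝ≥0∞) from rfl]
  rw [integral_withDensity_eq_integral_smul hmeas]
  have hpt : ∀ u : EuclideanSpace ℂ (Fin D),
      (((D:ℝ) * (expval ρ u).re).toNNReal : ℝ≥0) • (((D:ℂ)+1) * expval O u - O.trace)
      = ((D:ℂ) * expval ρ u) * (((D:ℂ)+1) * expval O u - O.trace) := by
    intro u
    rw [NNReal.smul_def,
      Real.coe_toNNReal _ (mul_nonneg (Nat.cast_nonneg D) (hpos u).2)]
    rw [Complex.real_smul]
    have hre : (((expval ρ u).re : ℝ) : ℂ) = expval ρ u :=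
      Complex.ext (by simp) (by simp [(hpos u).1])
    push_cast
    rw [hre]
  simp_rw [hpt]
  exact ShadowAux.main_calc μ hsupp hinv hD ρ O
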